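/- arXiv:math/9811094 — 3 statements merged into one kernel-verified Lean document; each statement's English description precedes it below -/
import Mathlib

section
/- Suppose that any two rows of A are either equal or disjoint: for all i, j ∈ 𝒢, either ρ_i = ρ_j or ρ_i(k)·ρ_j(k) = 0 for all k ∈ 𝒢 (this holds in particular when A is the edge matrix of a directed graph, i.e. 𝒢 is the edge set and A(i,j) = 1 exactly when the range of edge i equals the source of edge j). Then: (a) R_A equals the closure in ℓ^∞(𝒢) of the complex linear span of {ρ_i : i ∈ 𝒢} ∪ {δ_i : i ∈ 𝒢}; and (b) 𝔯_A equals the additive subgroup of ℤ^𝒢 generated by {ρ_i : i ∈ 𝒢} ∪ {δ_i : i ∈ 𝒢}. -/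
open scoped BoundedContinuousFunction
open OnePoint

noncomputable section

namespace CK

variable {G : Type*}

/-- The `i`-th row of `A` as a complex-valued function on `G`. -/
def rho (A : G → G → Bool) (i : G) : G → ℂ := fun j => if A i j then 1 else 0

/-- The `i`-th row of the identity matrix as a complex-valued function on `G`. -/
def del [DecidableEq G] (i : G) : G → ℂ := fun j => if j = i then 1 else 0

/-- The `j`-th column of `A` as an element of `{0,1}^G`. -/
def col (A : G → G → Bool) (j : G) : G → Bool := fun i => A i j

variable [TopologicalSpace G] [DiscreteTopology G]

/-- `rho A i` as an element of `ℓ^∞(G)`, realized as bounded (continuous) functions on the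
discrete space `G`. -/
def rhoB (A : G → G → Bool) (i : G) : G →ᵇ ℂ :=
  BoundedContinuousFunction.ofNormedAddCommGroupDiscrete (rho A i) 1
    (by intro j; simp only [rho]; split <;> simp)

/-- `del i` as an element of `ℓ^∞(G)`. -/
def delB [DecidableEq G] (i : G) : G →ᵇ ℂ :=
  BoundedContinuousFunction.ofNormedAddCommGroupDiscrete (del i) 1
    (by intro j; simp only [del]; split <;> simp)

/-- The space `Γ̃_A`: the closure of `{(j, c_j) : j ∈ G}` in `G̃ × {0,1}^G`. -/
def GammaT (A : G → G → Bool) : Set (OnePoint G × (G → Bool)) :=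
  closure {p | ∃ j : G, p = ((j : OnePoint G), col A j)}

instance GammaT.compactSpace (A : G → G → Bool) : CompactSpace (GammaT A) :=
  isCompact_iff_compactSpace.mp (isClosed_closure).isCompact

variable [DecidableEq G]

/-- The generators of `R_A`: the rows of `A` and of the identity matrix. -/
def gens (A : G → G → Bool) : Set (G →ᵇ ℂ) :=
  Set.range (rhoB A) ∪ Set.range (delB (G := G))

/-- `R_A`, the smallest closed *-subalgebra of `ℓ^∞(G)` containing the rows of `A` and of the
identity matrix: the closure of the non-unital star subalgebra generated by them. -/
def RA (A : G → G → Bool) : Set (G →ᵇ ℂ) :=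
  closure (NonUnitalStarAlgebra.adjoin ℂ (gens A) : Set (G →ᵇ ℂ))

/-- `R̃_A`, the smallest closed unital *-subalgebra of `ℓ^∞(G)` containing `R_A` and `1`. -/
def RtA (A : G → G → Bool) : StarSubalgebra ℂ (G →ᵇ ℂ) :=
  (StarAlgebra.adjoin ℂ (gens A)).topologicalClosure

/-- The restriction map `Φ : C(Γ̃_A, ℂ) → ℓ^∞(G)`, `Φ(f)(j) = f(j, c_j)`. -/
def Phi (A : G → G → Bool) (f : C(GammaT A, ℂ)) : G →ᵇ ℂ :=
  BoundedContinuousFunction.ofNormedAddCommGroupDiscrete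
    (fun j => f ⟨((j : OnePoint G), col A j), subset_closure ⟨j, rfl⟩⟩) ‖f‖
    (fun j => f.norm_coe_le_norm _)

end CK

namespace CK

/-- The `i`-th row of `A` as an integer-valued function. -/
def rhoZ {G : Type*} (A : G → G → Bool) (i : G) : G → ℤ := fun j => if A i j then 1 else 0

/-- The `i`-th row of the identity matrix as an integer-valued function. -/
def delZ {G : Type*} [DecidableEq G] (i : G) : G → ℤ := fun j => if j = i then 1 else 0

/-- The generators of the ring `𝔯_A`. -/
def gensZ {G : Type*} [DecidableEq G] (A : G → G → Bool) : Set (G → ℤ) :=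
  Set.range (rhoZ A) ∪ Set.range (delZ (G := G))

/-- `𝔯_A`, the subring of `ℤ^G` generated by the rows of `A` and of the identity matrix. -/
def frakRA {G : Type*} [DecidableEq G] (A : G → G → Bool) : NonUnitalSubring (G → ℤ) :=
  NonUnitalSubring.closure (gensZ A)

end CK

namespace CKProof

variable {G : Type*} [DecidableEq G]

lemma rows_cases {A : G → G → Bool}
    (hedge : ∀ i j : G, (CK.rhoZ A i = CK.rhoZ A j) ∨
      (∀ k : G, CK.rhoZ A i k * CK.rhoZ A j k = 0)) (i j : G) :
    (∀ k, A i k = A j k) ∨ (∀ k, ¬(A i k = true ∧ A j k = true)) := by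
  rcases hedge i j with h | h
  · left
    intro k
    have := congrFun h k
    simp only [CK.rhoZ] at this
    cases hik : A i k <;> cases hjk : A j k <;> simp_all
  · right
    rintro k ⟨h1, h2⟩
    have := h k
    simp [CK.rhoZ, h1, h2] at this

section Complex

variable [TopologicalSpace G] [DiscreteTopology G] {A : G → G → Bool}

lemma rhoB_mul_rhoB_of_eq (i j : G) (h : ∀ k, A i k = A j k) :
    CK.rhoB A i * CK.rhoB A j = CK.rhoB A i := by
  ext k
  simp only [BoundedContinuousFunction.coe_mul, Pi.mul_apply, CK.rhoB,
    BoundedContinuousFunction.coe_ofNormedAddCommGroupDiscrete, CK.rho, ← h k]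
  split <;> simp_all

lemma rhoB_mul_rhoB_of_disj (i j : G) (h : ∀ k, ¬(A i k = true ∧ A j k = true)) :
    CK.rhoB A i * CK.rhoB A j = 0 := by
  ext k
  simp only [BoundedContinuousFunction.coe_mul, Pi.mul_apply, CK.rhoB,
    BoundedContinuousFunction.coe_ofNormedAddCommGroupDiscrete, CK.rho,
    BoundedContinuousFunction.coe_zero, Pi.zero_apply]
  have := h k
  cases hik : A i k <;> cases hjk : A j k <;> simp_all

lemma rhoB_mul_delB (i j : G) :
    CK.rhoB A i * CK.delB j = if A i j then CK.delB (G := G) j else 0 := by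
  ext k
  by_cases hk : k = j <;> by_cases hij : A i j <;>
    simp [CK.rhoB, CK.delB, CK.rho, CK.del, hk, hij]

lemma delB_mul_rhoB (i j : G) :
    CK.delB j * CK.rhoB A i = if A i j then CK.delB (G := G) j else 0 := by
  rw [mul_comm]; exact rhoB_mul_delB i j

lemma delB_mul_delB (i j : G) :
    CK.delB (G := G) i * CK.delB j = if i = j then CK.delB (G := G) i else 0 := by
  ext k
  by_cases hij : i = j <;> by_cases hk : k = i <;>
    simp [CK.delB, CK.del, hij, hk, apply_ite (fun f : G →ᵇ ℂ => f k)] <;>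
    simp_all

lemma gens_mul_mem
    (hedge : ∀ i j : G, (CK.rhoZ A i = CK.rhoZ A j) ∨
      (∀ k : G, CK.rhoZ A i k * CK.rhoZ A j k = 0))
    {x y : G →ᵇ ℂ} (hx : x ∈ CK.gens A) (hy : y ∈ CK.gens A) :
    x * y ∈ Submodule.span ℂ (CK.gens A) := by
  have hmem : ∀ z ∈ CK.gens A, z ∈ Submodule.span ℂ (CK.gens A) :=
    fun z hz => Submodule.subset_span hz
  rcases hx with ⟨i, rfl⟩ | ⟨i, rfl⟩ <;> rcases hy with ⟨j, rfl⟩ | ⟨j, rfl⟩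
  · rcases rows_cases hedge i j with h | h
    · rw [rhoB_mul_rhoB_of_eq i j h]
      exact hmem _ (Or.inl ⟨i, rfl⟩)
    · rw [rhoB_mul_rhoB_of_disj i j h]
      exact zero_mem _
  · rw [rhoB_mul_delB i j]
    split
    · exact hmem _ (Or.inr ⟨j, rfl⟩)
    · exact zero_mem _
  · rw [delB_mul_rhoB j i]
    split
    · exact hmem _ (Or.inr ⟨i, rfl⟩)
    · exact zero_mem _
  · rw [delB_mul_delB i j]
    split
    · exact hmem _ (Or.inr ⟨i, rfl⟩)
    · exact zero_mem _

lemma span_mul_mem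
    (hedge : ∀ i j : G, (CK.rhoZ A i = CK.rhoZ A j) ∨
      (∀ k : G, CK.rhoZ A i k * CK.rhoZ A j k = 0))
    {x y : G →ᵇ ℂ} (hx : x ∈ Submodule.span ℂ (CK.gens A))
    (hy : y ∈ Submodule.span ℂ (CK.gens A)) :
    x * y ∈ Submodule.span ℂ (CK.gens A) := by
  induction hy using Submodule.span_induction with
  | mem b hb =>
    induction hx using Submodule.span_induction with
    | mem a ha => exact gens_mul_mem hedge ha hb
    | zero => simpa using zero_mem _
    | add a c _ _ ha hc => rw [add_mul]; exact add_mem ha hc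
    | smul r a _ ha => rw [smul_mul_assoc]; exact Submodule.smul_mem _ _ ha
  | zero => simpa using zero_mem _
  | add b c _ _ hb hc => rw [mul_add]; exact add_mem hb hc
  | smul r b _ hb => rw [mul_smul_comm]; exact Submodule.smul_mem _ _ hb

lemma star_gens {x : G →ᵇ ℂ} (hx : x ∈ CK.gens (G := G) A) : star x = x := by
  rcases hx with ⟨i, rfl⟩ | ⟨i, rfl⟩ <;> ext k <;>
    simp [CK.rhoB, CK.delB, CK.rho, CK.del] <;> split <;> simp

lemma star_span_mem {x : G →ᵇ ℂ} (hx : x ∈ Submodule.span ℂ (CK.gens A)) :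
    star x ∈ Submodule.span ℂ (CK.gens A) := by
  induction hx using Submodule.span_induction with
  | mem a ha => rw [star_gens ha]; exact Submodule.subset_span ha
  | zero => simpa using zero_mem _
  | add a b _ _ ha hb => rw [star_add]; exact add_mem ha hb
  | smul r a _ ha => rw [star_smul]; exact Submodule.smul_mem _ _ ha

lemma adjoin_eq_span
    (hedge : ∀ i j : G, (CK.rhoZ A i = CK.rhoZ A j) ∨
      (∀ k : G, CK.rhoZ A i k * CK.rhoZ A j k = 0)) :
    (NonUnitalStarAlgebra.adjoin ℂ (CK.gens A) : Set (G →ᵇ ℂ)) =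
      (Submodule.span ℂ (CK.gens A) : Set (G →ᵇ ℂ)) := by
  apply Set.eq_of_subset_of_subset
  · intro x hx
    induction hx using NonUnitalStarAlgebra.adjoin_induction with
    | mem a ha => exact Submodule.subset_span ha
    | add a b _ _ ha hb => exact add_mem ha hb
    | zero => exact zero_mem _
    | mul a b _ _ ha hb => exact span_mul_mem hedge ha hb
    | smul r a _ ha => exact Submodule.smul_mem _ _ ha
    | star a _ ha => exact star_span_mem ha
  · intro x hx
    induction hx using Submodule.span_induction with
    | mem a ha => exact NonUnitalStarAlgebra.subset_adjoin ℂ _ ha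
    | zero => exact zero_mem _
    | add a b _ _ ha hb => exact add_mem ha hb
    | smul r a _ ha => exact SMulMemClass.smul_mem r ha

end Complex

section Int

variable {A : G → G → Bool}

lemma rhoZ_mul_rhoZ_of_eq (i j : G) (h : ∀ k, A i k = A j k) :
    CK.rhoZ A i * CK.rhoZ A j = CK.rhoZ A i := by
  funext k
  simp only [Pi.mul_apply, CK.rhoZ, ← h k]
  split <;> simp_all

lemma rhoZ_mul_rhoZ_of_disj (i j : G) (h : ∀ k, ¬(A i k = true ∧ A j k = true)) :
    CK.rhoZ A i * CK.rhoZ A j = 0 := by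
  funext k
  have := h k
  simp only [Pi.mul_apply, CK.rhoZ, Pi.zero_apply]
  cases hik : A i k <;> cases hjk : A j k <;> simp_all

lemma rhoZ_mul_delZ (i j : G) :
    CK.rhoZ A i * CK.delZ j = if A i j then CK.delZ (G := G) j else 0 := by
  funext k
  by_cases hk : k = j <;> by_cases hij : A i j <;>
    simp [CK.rhoZ, CK.delZ, hk, hij]

lemma delZ_mul_delZ (i j : G) :
    CK.delZ (G := G) i * CK.delZ j = if i = j then CK.delZ (G := G) i else 0 := by
  funext k
  by_cases hij : i = j <;> by_cases hk : k = i <;>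
    simp [CK.delZ, hij, hk, apply_ite (fun f : G → ℤ => f k)] <;>
    simp_all

lemma gensZ_mul_mem
    (hedge : ∀ i j : G, (CK.rhoZ A i = CK.rhoZ A j) ∨
      (∀ k : G, CK.rhoZ A i k * CK.rhoZ A j k = 0))
    {x y : G → ℤ} (hx : x ∈ CK.gensZ A) (hy : y ∈ CK.gensZ A) :
    x * y ∈ AddSubgroup.closure (CK.gensZ A) := by
  have hmem : ∀ z ∈ CK.gensZ A, z ∈ AddSubgroup.closure (CK.gensZ A) :=
    fun z hz => AddSubgroup.subset_closure hz
  rcases hx with ⟨i, rfl⟩ | ⟨i, rfl⟩ <;> rcases hy with ⟨j, rfl⟩ | ⟨j, rfl⟩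
  · rcases rows_cases hedge i j with h | h
    · rw [rhoZ_mul_rhoZ_of_eq i j h]
      exact hmem _ (Or.inl ⟨i, rfl⟩)
    · rw [rhoZ_mul_rhoZ_of_disj i j h]
      exact zero_mem _
  · rw [rhoZ_mul_delZ i j]
    split
    · exact hmem _ (Or.inr ⟨j, rfl⟩)
    · exact zero_mem _
  · rw [mul_comm, rhoZ_mul_delZ j i]
    split
    · exact hmem _ (Or.inr ⟨i, rfl⟩)
    · exact zero_mem _
  · rw [delZ_mul_delZ i j]
    split
    · exact hmem _ (Or.inr ⟨i, rfl⟩)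
    · exact zero_mem _

lemma addclosure_mul_mem
    (hedge : ∀ i j : G, (CK.rhoZ A i = CK.rhoZ A j) ∨
      (∀ k : G, CK.rhoZ A i k * CK.rhoZ A j k = 0))
    {x y : G → ℤ} (hx : x ∈ AddSubgroup.closure (CK.gensZ A))
    (hy : y ∈ AddSubgroup.closure (CK.gensZ A)) :
    x * y ∈ AddSubgroup.closure (CK.gensZ A) := by
  induction hy using AddSubgroup.closure_induction with
  | mem b hb =>
    induction hx using AddSubgroup.closure_induction with
    | mem a ha => exact gensZ_mul_mem hedge ha hb
    | zero => simpa using zero_mem _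
    | add a c _ _ ha hc => rw [add_mul]; exact add_mem ha hc
    | neg a _ ha => rw [neg_mul]; exact neg_mem ha
  | zero => simpa using zero_mem _
  | add b c _ _ hb hc => rw [mul_add]; exact add_mem hb hc
  | neg b _ hb => rw [mul_neg]; exact neg_mem hb

lemma ringclosure_eq_addclosure
    (hedge : ∀ i j : G, (CK.rhoZ A i = CK.rhoZ A j) ∨
      (∀ k : G, CK.rhoZ A i k * CK.rhoZ A j k = 0)) :
    (CK.frakRA A : Set (G → ℤ)) = (AddSubgroup.closure (CK.gensZ A) : Set (G → ℤ)) := by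
  apply Set.eq_of_subset_of_subset
  · intro x hx
    induction hx using NonUnitalSubring.closure_induction with
    | mem a ha => exact AddSubgroup.subset_closure ha
    | zero => exact zero_mem _
    | add a b _ _ ha hb => exact add_mem ha hb
    | neg a _ ha => exact neg_mem ha
    | mul a b _ _ ha hb => exact addclosure_mul_mem hedge ha hb
  · intro x hx
    induction hx using AddSubgroup.closure_induction with
    | mem a ha => exact NonUnitalSubring.subset_closure ha
    | zero => exact zero_mem _
    | add a b _ _ ha hb => exact add_mem ha hb
    | neg a _ ha => exact neg_mem ha

end Int

end CKProof

/-- If any two rows of `A` are equal or disjoint (e.g. when `A` is an edge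
matrix of a directed graph), then (a) `R_A` is the closed linear span of the rows of `A` and of
the identity matrix, and (b) `𝔯_A` is the additive subgroup of `ℤ^G` they generate. -/
theorem stmt_17 {G : Type*} [Nonempty G] [TopologicalSpace G] [DiscreteTopology G]
    [DecidableEq G] (A : G → G → Bool) (hA : ∀ i : G, ∃ j : G, A i j = true)
    (hedge : ∀ i j : G, (CK.rhoZ A i = CK.rhoZ A j) ∨
      (∀ k : G, CK.rhoZ A i k * CK.rhoZ A j k = 0)) :
    CK.RA A =
      closure ((Submodule.span ℂ (Set.range (CK.rhoB A) ∪ Set.range (CK.delB (G := G)))) :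
        Set (G →ᵇ ℂ)) ∧
    (CK.frakRA A : Set (G → ℤ)) = (AddSubgroup.closure (CK.gensZ A) : Set (G → ℤ)) := by
  constructor
  · unfold CK.RA
    rw [CKProof.adjoin_eq_span hedge]
    rfl
  · exact CKProof.ringclosure_eq_addclosure hedge
end
end

section
/- Let A be the ℕ × ℕ matrix with A(i,j) = 1 for all i, j (so every row ρ_i equals the constant function 𝟏). Then: (a) 𝔯_A = {g + n·𝟏 : g ∈ ⊕_ℕ ℤ, n ∈ ℤ}, the ring of eventually constant integer sequences, and each h ∈ 𝔯_A has a unique such decomposition h = g + n·𝟏; (b) the group homomorphism T : ⊕_ℕ ℤ → 𝔯_A defined by T(f) := f − (Σ_n f(n))·𝟏 (which is the map (I − Aᵗ), since T(δ_i) = δ_i − ρ_i) is injective; (c) the map φ : 𝔯_A → ℤ given by φ(g + n·𝟏) := n + Σ_k g(k) is a well-defined surjective group homomorphism whose kernel is exactly the image of T; consequently 𝔯_A / im T ≅ ℤ. (Via the identifications K₁ ≅ ker(I − Aᵗ) and K₀ ≅ coker(I − Aᵗ), this recovers K₁(𝒪_∞) = 0 and K₀(𝒪_∞) = ℤ.)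 -/
noncomputable section

namespace CK18

/-- The `i`-th row of the identity matrix over `ℕ`, as an integer sequence. -/
def delta (i : ℕ) : ℕ → ℤ := fun j => if j = i then 1 else 0

/-- The `i`-th row of the all-ones matrix `A`: the constant sequence `𝟏`. -/
def rho (_ : ℕ) : ℕ → ℤ := fun _ => 1

/-- `𝔯_A`, the subring of `ℤ^ℕ` generated by the rows of `A` and of the identity matrix. -/
def frakRA : NonUnitalSubring (ℕ → ℤ) :=
  NonUnitalSubring.closure (Set.range rho ∪ Set.range delta)

/-- The map `T = (I - Aᵗ) : ⊕_ℕ ℤ → ℤ^ℕ`, `T f = f - (Σ_n f(n))·𝟏`. -/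
def T (f : ℕ →₀ ℤ) : ℕ → ℤ := fun j => f j - f.sum fun _ v => v

end CK18

namespace CK18

lemma uniq (g g' : ℕ →₀ ℤ) (n n' : ℤ)
    (h : ((⇑g : ℕ → ℤ) + fun _ => n) = ((⇑g' : ℕ → ℤ) + fun _ => n')) :
    g = g' ∧ n = n' := by
  obtain ⟨j, hj⟩ := Infinite.exists_notMem_finset (g.support ∪ g'.support)
  simp only [Finset.mem_union, Finsupp.mem_support_iff, not_or, not_not] at hj
  have hjj := congrFun h j
  simp only [Pi.add_apply, hj.1, hj.2, zero_add] at hjj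
  subst hjj
  refine ⟨?_, rfl⟩
  ext k
  have := congrFun h k
  simp only [Pi.add_apply] at this
  linarith

def evset : NonUnitalSubring (ℕ → ℤ) where
  carrier := {h | ∃ (g : ℕ →₀ ℤ) (n : ℤ), h = (⇑g : ℕ → ℤ) + fun _ => n}
  zero_mem' := ⟨0, 0, by funext j; simp⟩
  add_mem' := by
    rintro a b ⟨g, n, rfl⟩ ⟨g', n', rfl⟩
    exact ⟨g + g', n + n', by funext j; simp; ring⟩
  neg_mem' := by
    intro a ha
    obtain ⟨g, n, rfl⟩ := ha
    exact ⟨-g, -n, by funext j; simp; ring⟩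
  mul_mem' := by
    intro a b ha hb
    obtain ⟨g, n, rfl⟩ := ha
    obtain ⟨g', n', rfl⟩ := hb
    refine ⟨g * g' + n • g' + n' • g, n * n', ?_⟩
    funext j
    simp [Finsupp.mul_apply]
    ring

lemma const_mem (n : ℤ) : (fun _ => n : ℕ → ℤ) ∈ frakRA := by
  have h1 : rho 0 ∈ frakRA :=
    NonUnitalSubring.subset_closure (Set.mem_union_left _ (Set.mem_range_self 0))
  have := zsmul_mem h1 n
  convert this using 1
  funext j
  simp [rho]

lemma coe_single (a : ℕ) (b : ℤ) : (⇑(Finsupp.single a b) : ℕ → ℤ) = b • delta a := by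
  funext j
  simp [delta, Finsupp.single_apply, eq_comm, mul_comm]

lemma coe_mem (g : ℕ →₀ ℤ) : (⇑g : ℕ → ℤ) ∈ frakRA := by
  induction g using Finsupp.induction_linear with
  | zero => simpa using frakRA.zero_mem
  | add f g hf hg => simpa using add_mem hf hg
  | single a b =>
      rw [coe_single]
      exact zsmul_mem (NonUnitalSubring.subset_closure (Set.mem_union_right _ (Set.mem_range_self a))) b

lemma mem_frakRA_iff (h : ℕ → ℤ) :
    h ∈ frakRA ↔ ∃ (g : ℕ →₀ ℤ) (n : ℤ), h = (⇑g : ℕ → ℤ) + fun _ => n := by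
  constructor
  · intro hh
    have hle : frakRA ≤ evset := by
      rw [frakRA, NonUnitalSubring.closure_le]
      rintro x (⟨i, rfl⟩ | ⟨i, rfl⟩)
      · show ∃ (g : ℕ →₀ ℤ) (n : ℤ), rho i = (⇑g : ℕ → ℤ) + fun _ => n
        exact ⟨0, 1, by funext j; simp [rho]⟩
      · show ∃ (g : ℕ →₀ ℤ) (n : ℤ), delta i = (⇑g : ℕ → ℤ) + fun _ => n
        exact ⟨Finsupp.single i 1, 0, by funext j; simp [delta, Finsupp.single_apply, eq_comm]⟩
    exact hle hh
  · rintro ⟨g, n, rfl⟩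
    exact add_mem (coe_mem g) (const_mem n)

noncomputable def phiFun (x : frakRA) : ℤ :=
  ((mem_frakRA_iff x.1).mp x.2).choose.sum (fun _ v => v)
    + ((mem_frakRA_iff x.1).mp x.2).choose_spec.choose

lemma phiFun_eq (x : frakRA) (g : ℕ →₀ ℤ) (n : ℤ)
    (h : (x : ℕ → ℤ) = (⇑g : ℕ → ℤ) + fun _ => n) :
    phiFun x = n + g.sum fun _ v => v := by
  obtain ⟨hg, hn⟩ := uniq _ g _ n
    (((mem_frakRA_iff x.1).mp x.2).choose_spec.choose_spec.symm.trans h)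
  have h1 : (((mem_frakRA_iff x.1).mp x.2).choose.sum fun _ v => v)
      = g.sum fun _ v => v := by rw [hg]
  rw [phiFun, h1, hn]; ring

noncomputable def phi : frakRA →+ ℤ :=
  AddMonoidHom.mk' phiFun (by
    intro x y
    obtain ⟨gx, nx, hx⟩ := (mem_frakRA_iff x.1).mp x.2
    obtain ⟨gy, ny, hy⟩ := (mem_frakRA_iff y.1).mp y.2
    have hxy : ((x + y : frakRA) : ℕ → ℤ) = ⇑(gx + gy) + fun _ => nx + ny := by
      show x.1 + y.1 = _
      rw [hx, hy]; funext j; simp; ring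
    rw [phiFun_eq _ _ _ hxy, phiFun_eq x gx nx hx, phiFun_eq y gy ny hy,
      Finsupp.sum_add_index' (fun _ => rfl) (fun _ _ _ => rfl)]
    ring)

lemma phi_eq (g : ℕ →₀ ℤ) (n : ℤ) (h : ((⇑g : ℕ → ℤ) + fun _ => n) ∈ frakRA) :
    phi ⟨(⇑g : ℕ → ℤ) + fun _ => n, h⟩ = n + g.sum fun _ v => v :=
  phiFun_eq _ g n rfl

lemma phi_surj : Function.Surjective phi := by
  intro n
  refine ⟨⟨fun _ => n, const_mem n⟩, ?_⟩
  have : ((⟨fun _ => n, const_mem n⟩ : frakRA) : ℕ → ℤ)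
      = ⇑(0 : ℕ →₀ ℤ) + fun _ => n := by funext j; simp
  rw [show (phi ⟨fun _ => n, const_mem n⟩ : ℤ) = phiFun _ from rfl,
    phiFun_eq _ 0 n this, Finsupp.sum_zero_index, add_zero]

lemma T_mem (f : ℕ →₀ ℤ) : T f ∈ frakRA := by
  rw [mem_frakRA_iff]
  exact ⟨f, -(f.sum fun _ v => v), by funext j; simp [T]; ring⟩

lemma phi_ker (x : frakRA) : phi x = 0 ↔ ∃ f : ℕ →₀ ℤ, (x : ℕ → ℤ) = T f := by
  obtain ⟨g, n, hx⟩ := (mem_frakRA_iff x.1).mp x.2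
  constructor
  · intro h0
    rw [show (phi x : ℤ) = phiFun x from rfl, phiFun_eq x g n hx] at h0
    refine ⟨g, ?_⟩
    rw [hx]; funext j; simp [T]; linarith
  · rintro ⟨f, hf⟩
    have hx' : (x : ℕ → ℤ) = ⇑f + fun _ => -(f.sum fun _ v => v) := by
      rw [hf]; funext j; simp [T]; ring
    rw [show (phi x : ℤ) = phiFun x from rfl, phiFun_eq x f _ hx']
    ring

lemma T_single (i : ℕ) : T (Finsupp.single i 1) = delta i - rho i := by
  funext j
  simp [T, delta, rho, Finsupp.single_apply, Finsupp.sum_single_index, eq_comm]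

lemma T_inj : Function.Injective T := by
  intro f f' h
  obtain ⟨j, hj⟩ := Infinite.exists_notMem_finset (f.support ∪ f'.support)
  simp only [Finset.mem_union, Finsupp.mem_support_iff, not_or, not_not] at hj
  have hjj := congrFun h j
  simp only [T, hj.1, hj.2, zero_sub, neg_inj] at hjj
  ext k
  have := congrFun h k
  simp only [T, hjj] at this
  linarith

end CK18


/-- For the all-ones `ℕ × ℕ` matrix `A`: (a) `𝔯_A` is the ring of
eventually constant integer sequences `g + n·𝟏` (with `g` finitely supported), the
decomposition being unique; (b) `T = (I - Aᵗ)` maps into `𝔯_A`, sends `δ_i` to `δ_i - ρ_i`,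
and is injective; (c) `φ(g + n·𝟏) = n + Σ_k g(k)` is a well-defined surjective homomorphism
`𝔯_A → ℤ` with kernel exactly `im T`; consequently `𝔯_A / im T ≅ ℤ`
(recovering `K₁(𝒪_∞) = 0` and `K₀(𝒪_∞) = ℤ`). -/
theorem stmt_18 :
    -- (a): description of `𝔯_A` and uniqueness of the decomposition
    ((CK18.frakRA : Set (ℕ → ℤ)) =
      {h : ℕ → ℤ | ∃ (g : ℕ →₀ ℤ) (n : ℤ), h = (⇑g : ℕ → ℤ) + fun _ => n}) ∧
    (∀ (g g' : ℕ →₀ ℤ) (n n' : ℤ),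
      ((⇑g : ℕ → ℤ) + fun _ => n) = ((⇑g' : ℕ → ℤ) + fun _ => n') → g = g' ∧ n = n') ∧
    -- (b): `T` maps into `𝔯_A`, `T δ_i = δ_i - ρ_i`, and `T` is injective
    (∀ f : ℕ →₀ ℤ, CK18.T f ∈ CK18.frakRA) ∧
    (∀ i : ℕ, CK18.T (Finsupp.single i 1) = CK18.delta i - CK18.rho i) ∧
    Function.Injective CK18.T ∧
    -- (c): the index map `φ` and the computation of the cokernel of `T`
    (∃ φ : CK18.frakRA →+ ℤ,
      (∀ (g : ℕ →₀ ℤ) (n : ℤ) (h : ((⇑g : ℕ → ℤ) + fun _ => n) ∈ CK18.frakRA),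
        φ ⟨(⇑g : ℕ → ℤ) + fun _ => n, h⟩ = n + g.sum fun _ v => v) ∧
      Function.Surjective φ ∧
      (∀ x : CK18.frakRA, φ x = 0 ↔ ∃ f : ℕ →₀ ℤ, (x : ℕ → ℤ) = CK18.T f)) ∧
    Nonempty ((CK18.frakRA ⧸ AddSubgroup.closure
      {x : CK18.frakRA | ∃ f : ℕ →₀ ℤ, (x : ℕ → ℤ) = CK18.T f}) ≃+ ℤ) := by
  refine ⟨?_, fun g g' n n' h => CK18.uniq g g' n n' h, CK18.T_mem, CK18.T_single, CK18.T_inj,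
    ⟨CK18.phi, CK18.phi_eq, CK18.phi_surj, CK18.phi_ker⟩, ?_⟩
  · ext h; exact CK18.mem_frakRA_iff h
  · have hK : AddSubgroup.closure {x : CK18.frakRA | ∃ f : ℕ →₀ ℤ, (x : ℕ → ℤ) = CK18.T f}
        = CK18.phi.ker := by
      apply le_antisymm
      · rw [AddSubgroup.closure_le]
        intro x hx
        exact AddMonoidHom.mem_ker.mpr ((CK18.phi_ker x).mpr hx)
      · intro x hx
        exact AddSubgroup.subset_closure ((CK18.phi_ker x).mp (AddMonoidHom.mem_ker.mp hx))
    exact ⟨(QuotientAddGroup.quotientAddEquivOfEq hK).trans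
      (QuotientAddGroup.quotientKerEquivOfSurjective CK18.phi CK18.phi_surj)⟩
end
end

section
/- Let A be the ℕ × ℕ matrix with A(i,j) = 1 if i + j is odd and A(i,j) = 0 otherwise (the 'checkerboard' matrix; its i-th row ρ_i is 𝟏_odd for even i and 𝟏_even for odd i). Then: (a) 𝔯_A = {g + a·𝟏_even + b·𝟏_odd : g ∈ ⊕_ℕ ℤ, a, b ∈ ℤ}, and each h ∈ 𝔯_A has a unique such decomposition; (b) the group homomorphism T : ⊕_ℕ ℤ → 𝔯_A defined by T(f) := f − (Σ_{n odd} f(n))·𝟏_even − (Σ_{n even} f(n))·𝟏_odd (which is the map (I − Aᵗ), since T(δ_i) = δ_i − ρ_i) is injective; (c) the map φ : 𝔯_A → ℤ × ℤ given by φ(g + a·𝟏_even + b·𝟏_odd) := (a + Σ_{n odd} g(n), b + Σ_{n even} g(n)) is a well-defined surjective group homomorphism whose kernel is exactly the image of T; consequently 𝔯_A / im T ≅ ℤ × ℤ. (Via the identifications K₁ ≅ ker(I − Aᵗ) and K₀ ≅ coker(I − Aᵗ), this gives K₁(𝒪_A) = 0 and K₀(𝒪_A) = ℤ × ℤ.)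 -/
noncomputable section

namespace CK19

/-- The checkerboard matrix: `A(i,j) = 1` iff `i + j` is odd. -/
def A (i j : ℕ) : Bool := decide (Odd (i + j))

/-- The `i`-th row of the identity matrix over `ℕ`, as an integer sequence. -/
def delta (i : ℕ) : ℕ → ℤ := fun j => if j = i then 1 else 0

/-- The `i`-th row of the checkerboard matrix, as an integer sequence
(`𝟏_odd` for even `i`, `𝟏_even` for odd `i`). -/
def rho (i : ℕ) : ℕ → ℤ := fun j => if A i j then 1 else 0

/-- The characteristic function of the even numbers. -/
def oneEven : ℕ → ℤ := fun n => if Even n then 1 else 0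

/-- The characteristic function of the odd numbers. -/
def oneOdd : ℕ → ℤ := fun n => if Even n then 0 else 1

/-- `𝔯_A`, the subring of `ℤ^ℕ` generated by the rows of `A` and of the identity matrix. -/
def frakRA : NonUnitalSubring (ℕ → ℤ) :=
  NonUnitalSubring.closure (Set.range rho ∪ Set.range delta)

/-- The sum of `f(n)` over odd `n`. -/
def sumOdd (f : ℕ →₀ ℤ) : ℤ := f.sum fun n v => if Even n then 0 else v

/-- The sum of `f(n)` over even `n`. -/
def sumEven (f : ℕ →₀ ℤ) : ℤ := f.sum fun n v => if Even n then v else 0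

/-- The map `T = (I - Aᵗ) : ⊕_ℕ ℤ → ℤ^ℕ`,
`T f = f - (Σ_{n odd} f(n))·𝟏_even - (Σ_{n even} f(n))·𝟏_odd`. -/
def T (f : ℕ →₀ ℤ) : ℕ → ℤ :=
  fun j => f j - sumOdd f * oneEven j - sumEven f * oneOdd j

end CK19

namespace CK19aux
open CK19

lemma rho_even {i : ℕ} (h : Even i) : rho i = oneOdd := by
  funext j
  simp only [rho, oneOdd, A, decide_eq_true_iff]
  rcases Nat.even_or_odd j with hj | hj
  · have h1 : Even (i + j) := h.add hj
    simp [Nat.not_odd_iff_even.mpr h1, hj]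
  · have : Odd (i + j) := h.add_odd hj
    simp [this, Nat.not_even_iff_odd.mpr hj]

lemma rho_odd {i : ℕ} (h : ¬ Even i) : rho i = oneEven := by
  funext j
  simp only [rho, oneEven, A, decide_eq_true_iff]
  rcases Nat.even_or_odd j with hj | hj
  · have : Odd (i + j) := (Nat.not_even_iff_odd.mp h).add_even hj
    simp [this, hj]
  · have h1 : Even (i + j) := (Nat.not_even_iff_odd.mp h).add_odd hj
    simp [Nat.not_odd_iff_even.mpr h1, Nat.not_even_iff_odd.mpr hj]

lemma sup_lemma (g : ℕ →₀ ℤ) {n : ℕ} (h : g.support.sup id < n) : g n = 0 := by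
  by_contra hn
  have := Finset.le_sup (f := id) (Finsupp.mem_support_iff.mpr hn)
  simp only [id] at this; omega
lemma oneEven_mem : oneEven ∈ frakRA := by
  rw [← rho_odd (by decide : ¬ Even 1)]
  exact NonUnitalSubring.subset_closure (Or.inl ⟨1, rfl⟩)

lemma oneOdd_mem : oneOdd ∈ frakRA := by
  rw [← rho_even (by decide : Even 0)]
  exact NonUnitalSubring.subset_closure (Or.inl ⟨0, rfl⟩)

lemma coe_single (i : ℕ) (c : ℤ) : ⇑(Finsupp.single i c) = c • delta i := by
  funext j
  simp [Finsupp.single_apply, delta, eq_comm]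

lemma finsupp_mem (g : ℕ →₀ ℤ) : ⇑g ∈ frakRA := by
  induction g using Finsupp.induction with
  | zero => simpa using (frakRA).zero_mem
  | single_add i c f _ _ ih =>
      rw [Finsupp.coe_add, coe_single]
      refine add_mem ?_ ih
      have hd : delta i ∈ frakRA :=
        NonUnitalSubring.subset_closure (Set.mem_union_right _ ⟨i, rfl⟩)
      exact zsmul_mem hd c

lemma mulFin (g : ℕ →₀ ℤ) (h : ℕ → ℤ) : ∃ g' : ℕ →₀ ℤ, ⇑g' = ⇑g * h := by
  have hfin : (Function.support (⇑g * h)).Finite := by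
    apply Set.Finite.subset g.support.finite_toSet
    intro n hn
    simp only [Function.mem_support, Pi.mul_apply] at hn
    simp only [Finset.mem_coe, Finsupp.mem_support_iff]
    intro h0; exact hn (by simp [h0])
  exact ⟨Finsupp.ofSupportFinite _ hfin, rfl⟩

lemma ee : oneEven * oneEven = oneEven := by
  funext n; by_cases h : Even n <;> simp [oneEven, h]
lemma oo : oneOdd * oneOdd = oneOdd := by
  funext n; by_cases h : Even n <;> simp [oneOdd, h]
lemma eo : oneEven * oneOdd = 0 := by
  funext n; by_cases h : Even n <;> simp [oneEven, oneOdd, h]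
lemma oe : oneOdd * oneEven = 0 := by
  funext n; by_cases h : Even n <;> simp [oneEven, oneOdd, h]

def S : NonUnitalSubring (ℕ → ℤ) where
  carrier := {h : ℕ → ℤ | ∃ (g : ℕ →₀ ℤ) (a b : ℤ),
    h = (⇑g : ℕ → ℤ) + a • oneEven + b • oneOdd}
  zero_mem' := ⟨0, 0, 0, by simp⟩
  add_mem' := by
    rintro x y ⟨g, a, b, rfl⟩ ⟨g', a', b', rfl⟩
    exact ⟨g + g', a + a', b + b', by push_cast [Finsupp.coe_add, add_smul]; abel⟩
  neg_mem' := by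
    rintro x ⟨g, a, b, rfl⟩
    exact ⟨-g, -a, -b, by push_cast [Finsupp.coe_neg, neg_smul]; abel⟩
  mul_mem' := by
    rintro x y ⟨g, a, b, rfl⟩ ⟨g', a', b', rfl⟩
    obtain ⟨p, hp⟩ := mulFin g (⇑g' + a' • oneEven + b' • oneOdd)
    obtain ⟨q, hq⟩ := mulFin g' (a • oneEven + b • oneOdd)
    refine ⟨p + q, a * a', b * b', ?_⟩
    have expand : (⇑g + a • oneEven + b • oneOdd) * (⇑g' + a' • oneEven + b' • oneOdd)
        = ⇑g * (⇑g' + a' • oneEven + b' • oneOdd)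
          + ⇑g' * (a • oneEven + b • oneOdd)
          + (a • oneEven + b • oneOdd) * (a' • oneEven + b' • oneOdd) := by
      ring
    rw [expand, ← hp, ← hq, Finsupp.coe_add]
    have : (a • oneEven + b • oneOdd) * (a' • oneEven + b' • oneOdd)
        = (a * a') • oneEven + (b * b') • oneOdd := by
      funext n
      simp only [Pi.add_apply, Pi.mul_apply, Pi.smul_apply, smul_eq_mul]
      by_cases h : Even n <;> simp [oneEven, oneOdd, h]
    rw [this]; abel

lemma frakRA_eq_S : frakRA = S := by
  apply le_antisymm
  · apply NonUnitalSubring.closure_le.mpr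
    rintro x (⟨i, rfl⟩ | ⟨i, rfl⟩)
    · by_cases h : Even i
      · exact ⟨0, 0, 1, by simp [rho_even h]⟩
      · exact ⟨0, 1, 0, by simp [rho_odd h]⟩
    · exact ⟨Finsupp.single i 1, 0, 0, by simp [coe_single]⟩
  · rintro x ⟨g, a, b, rfl⟩
    exact add_mem (add_mem (finsupp_mem g)
      (zsmul_mem oneEven_mem a)) (zsmul_mem oneOdd_mem b)

lemma uniq (g g' : ℕ →₀ ℤ) (a b a' b' : ℤ)
    (h : (⇑g : ℕ → ℤ) + a • oneEven + b • oneOdd =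
      (⇑g' : ℕ → ℤ) + a' • oneEven + b' • oneOdd) :
    g = g' ∧ a = a' ∧ b = b' := by
  set s := g.support.sup id + g'.support.sup id + 1 with hs
  have hg2 : g (2 * s) = 0 := sup_lemma g (by omega)
  have hg2' : g' (2 * s) = 0 := sup_lemma g' (by omega)
  have hg3 : g (2 * s + 1) = 0 := sup_lemma g (by omega)
  have hg3' : g' (2 * s + 1) = 0 := sup_lemma g' (by omega)
  have heven : Even (2 * s) := even_two_mul s
  have hodd : ¬ Even (2 * s + 1) := by simp [Nat.even_add_one, heven]
  have h1 := congrFun h (2 * s)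
  have h2 := congrFun h (2 * s + 1)
  simp only [Pi.add_apply, Pi.smul_apply, smul_eq_mul, oneEven, oneOdd,
    if_pos heven, if_neg hodd, hg2, hg2', hg3, hg3'] at h1 h2
  have ha : a = a' := by simpa using h1
  have hb : b = b' := by simpa using h2
  subst ha; subst hb
  refine ⟨?_, rfl, rfl⟩
  have : (⇑g : ℕ → ℤ) = ⇑g' := by
    have := add_right_cancel (add_right_cancel h)
    exact this
  exact DFunLike.coe_injective this

lemma sumOdd_add (f g : ℕ →₀ ℤ) : sumOdd (f + g) = sumOdd f + sumOdd g := by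
  unfold sumOdd
  apply Finsupp.sum_add_index' <;> intros <;> split <;> simp

lemma sumEven_add (f g : ℕ →₀ ℤ) : sumEven (f + g) = sumEven f + sumEven g := by
  unfold sumEven
  apply Finsupp.sum_add_index' <;> intros <;> split <;> simp

lemma sumOdd_single (i : ℕ) (c : ℤ) :
    sumOdd (Finsupp.single i c) = if Even i then 0 else c := by
  unfold sumOdd; rw [Finsupp.sum_single_index (by simp)]

lemma sumEven_single (i : ℕ) (c : ℤ) :
    sumEven (Finsupp.single i c) = if Even i then c else 0 := by
  unfold sumEven; rw [Finsupp.sum_single_index (by simp)]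

lemma sumOdd_zero : sumOdd 0 = 0 := by simp [sumOdd]
lemma sumEven_zero : sumEven 0 = 0 := by simp [sumEven]

lemma T_decomp (f : ℕ →₀ ℤ) :
    T f = ⇑f + (-sumOdd f) • oneEven + (-sumEven f) • oneOdd := by
  funext j; simp only [T, Pi.add_apply, Pi.smul_apply, smul_eq_mul]; ring

lemma T_mem (f : ℕ →₀ ℤ) : T f ∈ frakRA := by
  rw [frakRA_eq_S, T_decomp]; exact ⟨f, _, _, rfl⟩

lemma T_single (i : ℕ) : T (Finsupp.single i 1) = delta i - rho i := by
  by_cases hi : Even i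
  · funext j
    simp only [T, sumOdd_single, sumEven_single, if_pos hi, Pi.sub_apply,
      rho_even hi, Finsupp.single_apply, delta]
    by_cases hij : i = j <;> simp [hij, eq_comm]
  · funext j
    simp only [T, sumOdd_single, sumEven_single, if_neg hi, Pi.sub_apply,
      rho_odd hi, Finsupp.single_apply, delta]
    by_cases hij : i = j <;> simp [hij, eq_comm]

lemma T_inj : Function.Injective T := by
  intro f f' h
  rw [T_decomp, T_decomp] at h
  exact (uniq _ _ _ _ _ _ h).1

lemma existsDec (x : frakRA) : ∃ p : (ℕ →₀ ℤ) × ℤ × ℤ,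
    (x : ℕ → ℤ) = ⇑p.1 + p.2.1 • oneEven + p.2.2 • oneOdd := by
  have hx := frakRA_eq_S.le x.2
  obtain ⟨g, a, b, h⟩ := hx
  exact ⟨(g, a, b), h⟩

def psi (p : (ℕ →₀ ℤ) × ℤ × ℤ) : ℤ × ℤ := (p.2.1 + sumOdd p.1, p.2.2 + sumEven p.1)

lemma psi_welldef {p q : (ℕ →₀ ℤ) × ℤ × ℤ}
    (h : (⇑p.1 : ℕ → ℤ) + p.2.1 • oneEven + p.2.2 • oneOdd
       = (⇑q.1 : ℕ → ℤ) + q.2.1 • oneEven + q.2.2 • oneOdd) : psi p = psi q := by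
  obtain ⟨h1, h2, h3⟩ := uniq _ _ _ _ _ _ h
  simp [psi, h1, h2, h3]

def Phi (x : frakRA) : ℤ × ℤ := psi (existsDec x).choose

lemma Phi_eq (x : frakRA) (g : ℕ →₀ ℤ) (a b : ℤ)
    (h : (x : ℕ → ℤ) = ⇑g + a • oneEven + b • oneOdd) :
    Phi x = (a + sumOdd g, b + sumEven g) := by
  have hs := (existsDec x).choose_spec
  exact psi_welldef (q := (g, a, b)) (hs.symm.trans h)

lemma Phi_add (x y : frakRA) : Phi (x + y) = Phi x + Phi y := by
  obtain ⟨⟨g, a, b⟩, hx⟩ := existsDec x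
  obtain ⟨⟨g', a', b'⟩, hy⟩ := existsDec y
  rw [Phi_eq x g a b hx, Phi_eq y g' a' b' hy,
    Phi_eq (x + y) (g + g') (a + a') (b + b') ?_]
  · simp only [sumOdd_add, sumEven_add, Prod.mk_add_mk, Prod.mk.injEq]
    constructor <;> ring
  · show ((x : ℕ → ℤ) + (y : ℕ → ℤ)) = _
    rw [hx, hy, Finsupp.coe_add, add_smul, add_smul]
    dsimp only
    abel

def phi : frakRA →+ ℤ × ℤ := AddMonoidHom.mk' Phi Phi_add

lemma phi_surj : Function.Surjective phi := by
  rintro ⟨a, b⟩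
  have hm : (⇑(0 : ℕ →₀ ℤ) : ℕ → ℤ) + a • oneEven + b • oneOdd ∈ frakRA := by
    rw [frakRA_eq_S]; exact ⟨0, a, b, rfl⟩
  refine ⟨⟨_, hm⟩, ?_⟩
  show Phi _ = _
  rw [Phi_eq _ 0 a b rfl]
  simp [sumOdd_zero, sumEven_zero]

lemma ker_iff (x : frakRA) : phi x = 0 ↔ ∃ f : ℕ →₀ ℤ, (x : ℕ → ℤ) = T f := by
  constructor
  · intro h0
    obtain ⟨⟨g, a, b⟩, hx⟩ := existsDec x
    have h1 : Phi x = (a + sumOdd g, b + sumEven g) := Phi_eq x g a b hx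
    have h2 : (a + sumOdd g, b + sumEven g) = ((0 : ℤ), (0 : ℤ)) := by
      rw [← h1]; exact h0
    have ha : a = -sumOdd g := by
      have := congrArg Prod.fst h2; simp at this; linarith
    have hb : b = -sumEven g := by
      have := congrArg Prod.snd h2; simp at this; linarith
    exact ⟨g, by rw [hx, T_decomp, ha, hb]⟩
  · rintro ⟨f, hf⟩
    show Phi x = 0
    rw [Phi_eq x f (-sumOdd f) (-sumEven f) (by rw [hf, T_decomp])]
    simp

lemma closure_eq_ker :
    AddSubgroup.closure {x : frakRA | ∃ f : ℕ →₀ ℤ, (x : ℕ → ℤ) = T f} = phi.ker := by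
  apply le_antisymm
  · rw [AddSubgroup.closure_le]
    intro x hx
    exact AddMonoidHom.mem_ker.mpr ((ker_iff x).mpr hx)
  · intro x hx
    exact AddSubgroup.subset_closure ((ker_iff x).mp (AddMonoidHom.mem_ker.mp hx))

end CK19aux


/-- For the checkerboard matrix `A` over `ℕ`: (a) `𝔯_A` consists of the
sequences `g + a·𝟏_even + b·𝟏_odd` with `g` finitely supported, the decomposition being
unique; (b) `T = (I - Aᵗ)` maps into `𝔯_A`, sends `δ_i` to `δ_i - ρ_i`, and is injective;
(c) `φ(g + a·𝟏_even + b·𝟏_odd) = (a + Σ_{n odd} g(n), b + Σ_{n even} g(n))` is a well-defined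
surjective homomorphism `𝔯_A → ℤ × ℤ` with kernel exactly `im T`; consequently
`𝔯_A / im T ≅ ℤ × ℤ` (giving `K₁(𝒪_A) = 0` and `K₀(𝒪_A) = ℤ × ℤ`). -/
theorem stmt_19 :
    -- (a): description of `𝔯_A` and uniqueness of the decomposition
    ((CK19.frakRA : Set (ℕ → ℤ)) =
      {h : ℕ → ℤ | ∃ (g : ℕ →₀ ℤ) (a b : ℤ),
        h = (⇑g : ℕ → ℤ) + a • CK19.oneEven + b • CK19.oneOdd}) ∧
    (∀ (g g' : ℕ →₀ ℤ) (a b a' b' : ℤ),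
      (⇑g : ℕ → ℤ) + a • CK19.oneEven + b • CK19.oneOdd =
        (⇑g' : ℕ → ℤ) + a' • CK19.oneEven + b' • CK19.oneOdd →
      g = g' ∧ a = a' ∧ b = b') ∧
    -- (b): `T` maps into `𝔯_A`, `T δ_i = δ_i - ρ_i`, and `T` is injective
    (∀ f : ℕ →₀ ℤ, CK19.T f ∈ CK19.frakRA) ∧
    (∀ i : ℕ, CK19.T (Finsupp.single i 1) = CK19.delta i - CK19.rho i) ∧
    Function.Injective CK19.T ∧
    -- (c): the index map `φ` and the computation of the cokernel of `T`
    (∃ φ : CK19.frakRA →+ ℤ × ℤ,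
      (∀ (g : ℕ →₀ ℤ) (a b : ℤ)
        (h : ((⇑g : ℕ → ℤ) + a • CK19.oneEven + b • CK19.oneOdd) ∈ CK19.frakRA),
        φ ⟨(⇑g : ℕ → ℤ) + a • CK19.oneEven + b • CK19.oneOdd, h⟩ =
          (a + CK19.sumOdd g, b + CK19.sumEven g)) ∧
      Function.Surjective φ ∧
      (∀ x : CK19.frakRA, φ x = 0 ↔ ∃ f : ℕ →₀ ℤ, (x : ℕ → ℤ) = CK19.T f)) ∧
    Nonempty ((CK19.frakRA ⧸ AddSubgroup.closure
      {x : CK19.frakRA | ∃ f : ℕ →₀ ℤ, (x : ℕ → ℤ) = CK19.T f}) ≃+ (ℤ × ℤ)) := by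
  refine ⟨?_, CK19aux.uniq, CK19aux.T_mem, CK19aux.T_single, CK19aux.T_inj, ?_, ?_⟩
  · exact congrArg (fun (R : NonUnitalSubring (ℕ → ℤ)) => (R : Set (ℕ → ℤ)))
      CK19aux.frakRA_eq_S
  · exact ⟨CK19aux.phi, fun g a b h => CK19aux.Phi_eq _ g a b rfl,
      CK19aux.phi_surj, CK19aux.ker_iff⟩
  · constructor
    rw [CK19aux.closure_eq_ker]
    exact QuotientAddGroup.quotientKerEquivOfSurjective CK19aux.phi CK19aux.phi_surj
end
end
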